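/- arXiv:math/0607653 — 4 statements merged into one kernel-verified Lean document; each statement's English description precedes it below -/
import Mathlib

section
/- For every integer n ≥ 0, B_n(λ) tends to the n-th Bernoulli number B_n as λ → 1 with λ ranging over ℂ ∖ {0, 1}; here the Bernoulli numbers are those defined by t/(e^t − 1) = ∑_{n≥0} B_n·t^n/n! (so B_1 = −1/2). -/
open Complex Filter Finset Topology

noncomputable def FF : ℂ → ℂ := fun z => if z = 0 then 1 else z / (Complex.exp z - 1)

def UU : Set ℂ := {z : ℂ | Complex.exp z = 1 → z = 0}

lemma norm_ge_of_exp_one {z : ℂ} (h : Complex.exp z = 1) (hz : z ≠ 0) : 1 ≤ ‖z‖ := by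
  obtain ⟨n, rfl⟩ := Complex.exp_eq_one_iff.1 h
  have hn : n ≠ 0 := by
    rintro rfl; simp at hz
  have h1 : (1 : ℝ) ≤ |(n : ℝ)| := by exact_mod_cast Int.one_le_abs hn
  have hpi := Real.pi_gt_three
  have hnorm : ‖(n : ℂ) * (2 * (Real.pi : ℂ) * Complex.I)‖ = |(n : ℝ)| * (2 * Real.pi) := by
    simp [norm_mul]
    exact Or.inl Real.pi_pos.le
  rw [hnorm]
  nlinarith [abs_nonneg (n : ℝ)]

lemma UU_open : IsOpen UU := by
  rw [← isClosed_compl_iff]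
  have h : UUᶜ = {z : ℂ | Complex.exp z = 1} ∩ {z : ℂ | 1 ≤ ‖z‖} := by
    ext z
    simp only [UU, Set.mem_compl_iff, Set.mem_setOf_eq, Set.mem_inter_iff,
      Classical.not_imp]
    constructor
    · rintro ⟨h1, h2⟩; exact ⟨h1, norm_ge_of_exp_one h1 h2⟩
    · rintro ⟨h1, h2⟩
      refine ⟨h1, ?_⟩
      rintro rfl
      simp at h2
      linarith
  rw [h]
  exact (isClosed_eq Complex.continuous_exp continuous_const).inter
    (isClosed_le continuous_const continuous_norm)

lemma FF_analyticAt_ne {z : ℂ} (hz : z ≠ 0) (he : Complex.exp z ≠ 1) : AnalyticAt ℂ FF z := by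
  have h1 : AnalyticAt ℂ (fun w : ℂ => w / (Complex.exp w - 1)) z := by
    exact (analyticAt_id).div ((analyticAt_cexp).sub analyticAt_const) (sub_ne_zero.2 he)
  apply h1.congr
  filter_upwards [isOpen_ne.mem_nhds hz] with w hw
  simp [FF, hw]

lemma FF_tendsto_one : Tendsto FF (𝓝[≠] (0:ℂ)) (𝓝 1) := by
  have h : HasDerivAt Complex.exp 1 0 := by simpa using Complex.hasDerivAt_exp 0
  rw [hasDerivAt_iff_tendsto_slope] at h
  have h2 : Tendsto (fun z : ℂ => (slope Complex.exp 0 z)⁻¹) (𝓝[≠] (0:ℂ)) (𝓝 1) := by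
    simpa using h.inv₀ one_ne_zero
  apply h2.congr'
  filter_upwards [self_mem_nhdsWithin] with z hz
  have hz' : z ≠ 0 := hz
  rw [slope_def_field, FF]
  simp only [if_neg hz', Complex.exp_zero, sub_zero, inv_div]

lemma FF_continuousAt0 : ContinuousAt FF 0 := by
  have h0 : FF 0 = 1 := by simp [FF]
  unfold ContinuousAt
  rw [h0, ← nhdsNE_sup_pure]
  rw [tendsto_sup]
  exact ⟨FF_tendsto_one, by simpa [h0] using tendsto_pure_nhds FF 0⟩

lemma FF_analyticAt0 : AnalyticAt ℂ FF 0 := by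
  apply Complex.analyticAt_of_differentiable_on_punctured_nhds_of_continuousAt _ FF_continuousAt0
  have hball : Metric.ball (0:ℂ) 1 ∈ 𝓝[≠] (0:ℂ) :=
    nhdsWithin_le_nhds (Metric.ball_mem_nhds _ one_pos)
  filter_upwards [hball, self_mem_nhdsWithin] with z hz hz0
  have hz0' : z ≠ 0 := hz0
  refine (FF_analyticAt_ne hz0' fun h1 => ?_).differentiableAt
  have := norm_ge_of_exp_one h1 hz0'
  rw [Metric.mem_ball, dist_zero_right] at hz
  linarith

lemma FF_analytic : AnalyticOnNhd ℂ FF UU := by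
  intro z hz
  by_cases h0 : z = 0
  · subst h0; exact FF_analyticAt0
  · exact FF_analyticAt_ne h0 (fun h => absurd (hz h) h0)

lemma g_analytic (n : ℕ) : AnalyticOnNhd ℂ (iteratedDeriv n FF) UU := by
  induction n with
  | zero => simpa [iteratedDeriv_zero] using FF_analytic
  | succ n ih =>
    intro z hz
    rw [iteratedDeriv_succ]
    exact ih.deriv z hz

noncomputable def dd (n : ℕ) (z : ℂ) : ℂ := if n = 0 then z else if n = 1 then 1 else 0

lemma dd_zero_eq : dd 0 = fun z : ℂ => z := by funext z; simp [dd]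

lemma dd_succ_eq (n : ℕ) : dd (n+1) = fun _ : ℂ => (if n = 0 then (1:ℂ) else 0) := by
  funext z
  rcases n with _ | n <;> simp [dd]

lemma FF_base {z : ℂ} (hz : z ∈ UU) : Complex.exp z * FF z = FF z + z := by
  by_cases h0 : z = 0
  · subst h0; simp [FF]
  · have he : Complex.exp z ≠ 1 := fun h => h0 (hz h)
    have hne : Complex.exp z - 1 ≠ 0 := sub_ne_zero.2 he
    simp only [FF, if_neg h0]
    field_simp
    ring

lemma pascal_sum (n : ℕ) (a : ℕ → ℂ) :
    ∑ k ∈ range (n+2), ((n+1).choose k : ℂ) * a k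
      = ∑ k ∈ range (n+1), (n.choose k : ℂ) * a k
        + ∑ k ∈ range (n+1), (n.choose k : ℂ) * a (k+1) := by
  rw [sum_range_succ' (fun k => ((n+1).choose k : ℂ) * a k) (n+1)]
  have hch : ∀ k, (((n+1).choose (k+1) : ℕ) : ℂ) = (n.choose k : ℂ) + (n.choose (k+1) : ℂ) := by
    intro k
    rw [Nat.choose_succ_succ]
    push_cast
    ring
  simp_rw [hch, add_mul, sum_add_distrib]
  rw [sum_range_succ' (fun k => (n.choose k : ℂ) * a k) n]
  rw [sum_range_succ (fun k => (n.choose (k+1) : ℂ) * a (k+1)) n]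
  simp [Nat.choose_succ_self]
  ring

lemma key (n : ℕ) : ∀ z ∈ UU,
    Complex.exp z * ∑ k ∈ range (n+1), (n.choose k : ℂ) * iteratedDeriv k FF z
      = iteratedDeriv n FF z + dd n z := by
  induction n with
  | zero =>
    intro z hz
    simpa [dd, iteratedDeriv_zero] using FF_base hz
  | succ n ih =>
    intro z hz
    have hdiff : ∀ k, ∀ w ∈ UU, DifferentiableAt ℂ (iteratedDeriv k FF) w :=
      fun k w hw => ((g_analytic k) w hw).differentiableAt
    have hev : (fun w => Complex.exp w * ∑ k ∈ range (n+1), (n.choose k : ℂ) * iteratedDeriv k FF w)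
        =ᶠ[𝓝 z] (fun w => iteratedDeriv n FF w + dd n w) := by
      filter_upwards [UU_open.mem_nhds hz] with w hw
      exact ih w hw
    have hder := hev.deriv_eq
    have hDS : DifferentiableAt ℂ
        (fun w => ∑ k ∈ range (n+1), (n.choose k : ℂ) * iteratedDeriv k FF w) z := by
      apply DifferentiableAt.fun_sum
      intro k hk
      exact (hdiff k z hz).const_mul _
    have hL : deriv (fun w => Complex.exp w *
          ∑ k ∈ range (n+1), (n.choose k : ℂ) * iteratedDeriv k FF w) z
        = Complex.exp z * ∑ k ∈ range (n+1), (n.choose k : ℂ) * iteratedDeriv k FF z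
          + Complex.exp z * ∑ k ∈ range (n+1), (n.choose k : ℂ) * iteratedDeriv (k+1) FF z := by
      rw [deriv_fun_mul (Complex.differentiable_exp.differentiableAt) hDS, Complex.deriv_exp]
      congr 1
      rw [deriv_fun_sum (fun k hk => (hdiff k z hz).const_mul _)]
      congr 1
      refine Finset.sum_congr rfl fun k hk => ?_
      rw [deriv_const_mul _ (hdiff k z hz), ← iteratedDeriv_succ]
    have hdd : DifferentiableAt ℂ (dd n) z := by
      rcases n with _ | n
      · rw [dd_zero_eq]; exact differentiableAt_fun_id
      · rw [dd_succ_eq]; exact differentiableAt_const _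
    have hR : deriv (fun w => iteratedDeriv n FF w + dd n w) z
        = iteratedDeriv (n+1) FF z + dd (n+1) z := by
      rw [deriv_fun_add (hdiff n z hz) hdd, ← iteratedDeriv_succ]
      congr 1
      rcases n with _ | n
      · rw [dd_zero_eq]
        simp [dd]
      · rw [dd_succ_eq, deriv_const]
        simp [dd]
    rw [hL, hR] at hder
    rw [pascal_sum n (fun k => iteratedDeriv k FF z)]
    rw [mul_add, hder]

/-- The λ-Bernoulli numbers `B_n(λ)`, defined by `B_0(λ) = Log λ / (λ - 1)` and, for `n ≥ 1`,
by the recurrence `λ·∑_{k=0}^{n} C(n,k)·B_k(λ) - B_n(λ) = (1 if n = 1, 0 if n ≥ 2)`,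
encoding the generating function `(Log λ + t)/(λ e^t - 1) = ∑ B_n(λ) t^n/n!`. -/
noncomputable def lambdaBernoulli (lam : ℂ) : ℕ → ℂ
  | 0 => Complex.log lam / (lam - 1)
  | n + 1 =>
      ((if n = 0 then (1 : ℂ) else 0) -
        lam * ∑ k : Fin (n + 1), ((n + 1).choose (k : ℕ) : ℂ) * lambdaBernoulli lam k) / (lam - 1)

lemma zero_mem_UU : (0:ℂ) ∈ UU := fun _ => rfl

lemma g_zero (n : ℕ) : iteratedDeriv n FF 0 = ((bernoulli n : ℚ) : ℂ) := by
  induction n using Nat.strong_induction_on with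
  | _ n ih =>
    have h := key (n+1) 0 zero_mem_UU
    rw [Complex.exp_zero, one_mul, sum_range_succ, Nat.choose_self, Nat.cast_one, one_mul] at h
    have hdd : dd (n+1) 0 = if n+1 = 1 then (1:ℂ) else 0 := by simp [dd]
    rw [hdd] at h
    have h2 : ∑ k ∈ range n, ((n+1).choose k : ℂ) * iteratedDeriv k FF 0
        + ((n+1).choose n : ℂ) * iteratedDeriv n FF 0 = if n+1 = 1 then (1:ℂ) else 0 := by
      rw [← sum_range_succ]
      linear_combination h
    have hsum : ∑ k ∈ range n, ((n+1).choose k : ℂ) * iteratedDeriv k FF 0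
        = ∑ k ∈ range n, ((n+1).choose k : ℂ) * ((bernoulli k : ℚ) : ℂ) :=
      sum_congr rfl fun k hk => by rw [ih k (mem_range.1 hk)]
    have hq := sum_bernoulli (n+1)
    rw [sum_range_succ] at hq
    have hb : ∑ k ∈ range n, ((n+1).choose k : ℂ) * ((bernoulli k : ℚ) : ℂ)
        + ((n+1).choose n : ℂ) * ((bernoulli n : ℚ) : ℂ) = if n+1 = 1 then (1:ℂ) else 0 := by
      have h1 : ((∑ k ∈ range n, ((n+1).choose k : ℚ) * bernoulli k
          + ((n+1).choose n : ℚ) * bernoulli n : ℚ) : ℂ)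
          = ((if n+1 = 1 then (1:ℚ) else 0 : ℚ) : ℂ) := by
        exact_mod_cast congrArg (fun q : ℚ => (q : ℂ)) hq
      rw [apply_ite ((↑·) : ℚ → ℂ)] at h1
      push_cast at h1 ⊢
      convert h1 using 2 <;> norm_num
    have hC : ((n+1).choose n : ℂ) ≠ 0 :=
      Nat.cast_ne_zero.2 (Nat.choose_pos (Nat.le_succ n)).ne'
    refine mul_left_cancel₀ hC ?_
    linear_combination h2 - hb - hsum

lemma lambdaBernoulli_eq {lam : ℂ} (h0 : lam ≠ 0) (h1 : lam ≠ 1) :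
    ∀ n, lambdaBernoulli lam n = iteratedDeriv n FF (Complex.log lam) := by
  have hexp : Complex.exp (Complex.log lam) = lam := Complex.exp_log h0
  have hU : Complex.log lam ∈ UU := fun h => (h1 (hexp.symm.trans h)).elim
  have hz0 : Complex.log lam ≠ 0 := by
    intro h
    exact h1 (by rw [← hexp, h, Complex.exp_zero])
  have hl1 : lam - 1 ≠ 0 := sub_ne_zero.2 h1
  intro n
  induction n using Nat.strong_induction_on with
  | _ n ih =>
    rcases n with _ | n
    · rw [lambdaBernoulli, iteratedDeriv_zero]
      simp only [FF, if_neg hz0, hexp]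
    · have h := key (n+1) _ hU
      rw [hexp, sum_range_succ, Nat.choose_self, Nat.cast_one, one_mul] at h
      have hδ : dd (n+1) (Complex.log lam) = if n = 0 then (1:ℂ) else 0 := by
        rcases n with _ | n <;> simp [dd]
      rw [hδ] at h
      have hs : ∑ k : Fin (n+1), ((n+1).choose (k:ℕ) : ℂ) * lambdaBernoulli lam k
          = ∑ k ∈ range (n+1), ((n+1).choose k : ℂ) * iteratedDeriv k FF (Complex.log lam) := by
        rw [Fin.sum_univ_eq_sum_range (fun k => ((n+1).choose k : ℂ) * lambdaBernoulli lam k) (n+1)]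
        exact sum_congr rfl fun k hk => by rw [ih k (mem_range.1 hk)]
      rw [lambdaBernoulli, hs, div_eq_iff hl1]
      linear_combination -h

/-- for every `n ≥ 0`, `B_n(λ)` tends to the `n`-th Bernoulli number `B_n`
(with the convention `B_1 = -1/2`, i.e. `t/(e^t - 1) = ∑ B_n t^n/n!`) as `λ → 1` with
`λ` ranging over `ℂ \ {0, 1}`. -/
theorem lambdaBernoulli_tendsto_bernoulli (n : ℕ) :
    Filter.Tendsto (fun lam : ℂ => lambdaBernoulli lam n)
      (nhdsWithin 1 {z : ℂ | z ≠ 0 ∧ z ≠ 1}) (nhds ((bernoulli n : ℚ) : ℂ)) := by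
  have hcont : ContinuousAt (iteratedDeriv n FF) 0 :=
    ((g_analytic n) 0 zero_mem_UU).continuousAt
  have hlog : Tendsto Complex.log (nhdsWithin 1 {z : ℂ | z ≠ 0 ∧ z ≠ 1}) (𝓝 0) := by
    have h := (continuousAt_clog Complex.one_mem_slitPlane).tendsto
    rw [Complex.log_one] at h
    exact h.mono_left nhdsWithin_le_nhds
  have hmain : Tendsto (fun lam : ℂ => iteratedDeriv n FF (Complex.log lam))
      (nhdsWithin 1 {z : ℂ | z ≠ 0 ∧ z ≠ 1}) (nhds ((bernoulli n : ℚ) : ℂ)) := by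
    rw [← g_zero n]
    exact hcont.tendsto.comp hlog
  apply hmain.congr'
  filter_upwards [self_mem_nhdsWithin] with lam hlam
  exact (lambdaBernoulli_eq hlam.1 hlam.2 n).symm
end

section
/- Let p be a prime and let f be a polynomial with coefficients in ℚ_p. Then the sequence N ↦ p^{−N}·(∑_{x=0}^{p^N−1} f(x + 1) − ∑_{x=0}^{p^N−1} f(x)) converges in ℚ_p to f′(0), the value at 0 of the formal derivative of f. -/
/-- for a prime `p` and a polynomial `f` over `ℚ_p`, the sequence
`N ↦ p^{-N}·(∑_{x=0}^{p^N-1} f(x + 1) - ∑_{x=0}^{p^N-1} f(x))` converges in `ℚ_p` to `f′(0)`.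
This is the fundamental equation `I_1(f(·+1)) = I_1(f) + f′(0)` of the p-adic invariant
(Volkenborn) integral, for polynomial integrands. -/
theorem volkenborn_integral_equation (p : ℕ) [Fact p.Prime] (f : Polynomial ℚ_[p]) :
    Filter.Tendsto
      (fun N : ℕ =>
        ((p : ℚ_[p]) ^ N)⁻¹ *
          ((∑ x ∈ Finset.range (p ^ N), f.eval ((x : ℚ_[p]) + 1)) -
            ∑ x ∈ Finset.range (p ^ N), f.eval (x : ℚ_[p])))
      Filter.atTop (nhds (f.derivative.eval 0)) := by
  have hp1 : (1 : ℕ) < p := (Fact.out : p.Prime).one_lt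
  have hp0 : (p : ℚ_[p]) ≠ 0 := Nat.cast_ne_zero.mpr (Fact.out : p.Prime).ne_zero
  -- rewrite the sequence as (divX f).eval (p^N)
  have key : ∀ N : ℕ,
      ((p : ℚ_[p]) ^ N)⁻¹ *
          ((∑ x ∈ Finset.range (p ^ N), f.eval ((x : ℚ_[p]) + 1)) -
            ∑ x ∈ Finset.range (p ^ N), f.eval (x : ℚ_[p]))
      = (f.divX).eval ((p : ℚ_[p]) ^ N) := by
    intro N
    have htel : (∑ x ∈ Finset.range (p ^ N), f.eval ((x : ℚ_[p]) + 1)) -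
        ∑ x ∈ Finset.range (p ^ N), f.eval (x : ℚ_[p])
        = f.eval ((p : ℚ_[p]) ^ N) - f.eval 0 := by
      rw [← Finset.sum_sub_distrib]
      have := Finset.sum_range_sub (fun n : ℕ => f.eval (n : ℚ_[p])) (p ^ N)
      simpa [Nat.cast_add, Nat.cast_one, Nat.cast_pow] using this
    rw [htel]
    have hdvx := Polynomial.X_mul_divX_add f
    have heval : f.eval ((p : ℚ_[p]) ^ N) - f.eval 0 =
        (p : ℚ_[p]) ^ N * (f.divX).eval ((p : ℚ_[p]) ^ N) := by
      conv_lhs => rw [← hdvx]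
      simp [Polynomial.eval_add, Polynomial.eval_mul, Polynomial.coeff_zero_eq_eval_zero]
    rw [heval, ← mul_assoc, inv_mul_cancel₀ (pow_ne_zero _ hp0), one_mul]
  simp only [key]
  have hderiv : f.derivative.eval 0 = (f.divX).eval 0 := by
    rw [← Polynomial.coeff_zero_eq_eval_zero, ← Polynomial.coeff_zero_eq_eval_zero,
      Polynomial.coeff_derivative, Polynomial.coeff_divX]
    simp
  rw [hderiv]
  have hlt : ‖(p : ℚ_[p])‖ < 1 := Padic.norm_p_lt_one
  have h0 : Filter.Tendsto (fun N : ℕ => (p : ℚ_[p]) ^ N) Filter.atTop (nhds 0) :=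
    tendsto_pow_atTop_nhds_zero_of_norm_lt_one hlt
  exact ((f.divX.continuous_aeval).tendsto 0).comp h0
end

section
/- Let p be a prime, let d ≥ 1 be an integer, and let f be a polynomial with coefficients in ℚ_p. Then the sequence N ↦ p^{−N}·(∑_{x=0}^{p^N−1} f(x + d) − ∑_{x=0}^{p^N−1} f(x)) converges in ℚ_p to ∑_{j=0}^{d−1} f′(j), where f′ is the formal derivative of f. -/
lemma sum_shift_diff {M : Type*} [AddCommGroup M] (g : ℕ → M) (n d : ℕ) :
    (∑ x ∈ Finset.range n, g (x + d)) - ∑ x ∈ Finset.range n, g x =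
      ∑ j ∈ Finset.range d, (g (n + j) - g j) := by
  have h1 : ∑ x ∈ Finset.range (n + d), g x =
      (∑ x ∈ Finset.range n, g x) + ∑ j ∈ Finset.range d, g (n + j) :=
    Finset.sum_range_add g n d
  have h2 : ∑ x ∈ Finset.range (n + d), g x =
      (∑ j ∈ Finset.range d, g j) + ∑ x ∈ Finset.range n, g (d + x) := by
    rw [Nat.add_comm n d]; exact Finset.sum_range_add g d n
  have key : (∑ x ∈ Finset.range n, g x) + ∑ j ∈ Finset.range d, g (n + j) =
      (∑ j ∈ Finset.range d, g j) + ∑ x ∈ Finset.range n, g (d + x) := by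
    rw [← h1, ← h2]
  have hshift : ∑ x ∈ Finset.range n, g (x + d) = ∑ x ∈ Finset.range n, g (d + x) := by
    simp [Nat.add_comm]
  rw [hshift, Finset.sum_sub_distrib, sub_eq_sub_iff_add_eq_add]
  exact (add_comm _ _).trans (key.symm.trans (add_comm _ _))

/-- for a prime `p`, an integer `d ≥ 1` and a polynomial `f` over `ℚ_p`, the
sequence `N ↦ p^{-N}·(∑_{x=0}^{p^N-1} f(x + d) - ∑_{x=0}^{p^N-1} f(x))` converges in `ℚ_p`
to `∑_{j=0}^{d-1} f′(j)`. This is the integral equation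
`I_1(f(·+d)) = I_1(f) + ∑_{j=0}^{d-1} f′(j)` of the p-adic invariant (Volkenborn) integral,
for polynomial integrands. -/
theorem volkenborn_integral_equation_shift (p : ℕ) [Fact p.Prime] (d : ℕ) (hd : 1 ≤ d)
    (f : Polynomial ℚ_[p]) :
    Filter.Tendsto
      (fun N : ℕ =>
        ((p : ℚ_[p]) ^ N)⁻¹ *
          ((∑ x ∈ Finset.range (p ^ N), f.eval ((x : ℚ_[p]) + (d : ℚ_[p]))) -
            ∑ x ∈ Finset.range (p ^ N), f.eval (x : ℚ_[p])))
      Filter.atTop (nhds (∑ j ∈ Finset.range d, f.derivative.eval (j : ℚ_[p]))) := by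
  set g : ℕ → ℚ_[p] := fun k => f.eval (k : ℚ_[p]) with hg
  -- rewrite the sequence
  have heq : ∀ N : ℕ,
      ((p : ℚ_[p]) ^ N)⁻¹ *
        ((∑ x ∈ Finset.range (p ^ N), f.eval ((x : ℚ_[p]) + (d : ℚ_[p]))) -
          ∑ x ∈ Finset.range (p ^ N), f.eval (x : ℚ_[p])) =
      ∑ j ∈ Finset.range d,
        (f.eval ((j : ℚ_[p]) + (p : ℚ_[p]) ^ N) - f.eval (j : ℚ_[p])) / (p : ℚ_[p]) ^ N := by
    intro N
    have h1 : (∑ x ∈ Finset.range (p ^ N), f.eval ((x : ℚ_[p]) + (d : ℚ_[p]))) -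
        ∑ x ∈ Finset.range (p ^ N), f.eval (x : ℚ_[p]) =
        ∑ j ∈ Finset.range d, (g (p ^ N + j) - g j) := by
      have := sum_shift_diff g (p ^ N) d
      rw [← this]
      congr 1
      refine Finset.sum_congr rfl fun x _ => ?_
      simp only [hg]; push_cast; ring_nf
    rw [h1, Finset.mul_sum]
    refine Finset.sum_congr rfl fun j _ => ?_
    have : g (p ^ N + j) = f.eval ((j : ℚ_[p]) + (p : ℚ_[p]) ^ N) := by
      simp only [hg]; push_cast; ring_nf
    rw [this, hg]
    field_simp
  refine (Filter.tendsto_congr heq).mpr ?_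
  -- termwise convergence
  refine tendsto_finset_sum _ fun j _ => ?_
  have hpow : Filter.Tendsto (fun N : ℕ => (j : ℚ_[p]) + (p : ℚ_[p]) ^ N)
      Filter.atTop (nhdsWithin (j : ℚ_[p]) {(j : ℚ_[p])}ᶜ) := by
    rw [tendsto_nhdsWithin_iff]
    constructor
    · have := tendsto_pow_atTop_nhds_zero_of_norm_lt_one (Padic.norm_p_lt_one (p := p))
      simpa using (tendsto_const_nhds.add this)
    · filter_upwards with N
      simp only [Set.mem_compl_iff, Set.mem_singleton_iff]
      intro h
      have : ((p : ℚ_[p]) ^ N) = 0 := by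
        have := congrArg (fun z => z - (j : ℚ_[p])) h
        simpa using this
      exact pow_ne_zero N (NeZero.ne _) this
  have hder := (f.hasDerivAt (𝕜 := ℚ_[p]) (j : ℚ_[p]))
  rw [hasDerivAt_iff_tendsto_slope] at hder
  have := hder.comp hpow
  refine this.congr fun N => ?_
  simp [slope_def_field]
end

section
/- Let λ ∈ ℂ with λ ≠ 0 and λ ≠ 1. Then there exists ρ > 0 such that the power series ∑_{n≥0} B_n(λ)·t^n/n! converges absolutely for every complex t with |t| < ρ, and for every such t one has (λ·e^t − 1)·∑_{n≥0} B_n(λ)·t^n/n! = Log λ + t; that is, ∑_{n≥0} B_n(λ)·t^n/n! = (Log λ + t)/(λ e^t − 1) near t = 0. -/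
lemma lambdaBernoulli_zero_mul (lam : ℂ) (h1 : lam ≠ 1) :
    (lam - 1) * lambdaBernoulli lam 0 = Complex.log lam := by
  have hd : lam - 1 ≠ 0 := sub_ne_zero.mpr h1
  rw [lambdaBernoulli]
  field_simp

lemma lambdaBernoulli_succ (lam : ℂ) (n : ℕ) :
    lambdaBernoulli lam (n + 1) =
      ((if n = 0 then (1 : ℂ) else 0) -
        lam * ∑ k ∈ Finset.range (n + 1),
          (((n + 1).choose k : ℕ) : ℂ) * lambdaBernoulli lam k) / (lam - 1) := by
  rw [lambdaBernoulli, ← Fin.sum_univ_eq_sum_range]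

lemma lambdaBernoulli_rec (lam : ℂ) (h1 : lam ≠ 1) (n : ℕ) :
    lam * ∑ k ∈ Finset.range (n + 2),
        (((n + 1).choose k : ℕ) : ℂ) * lambdaBernoulli lam k
      - lambdaBernoulli lam (n + 1) = if n = 0 then 1 else 0 := by
  have hd : lam - 1 ≠ 0 := sub_ne_zero.mpr h1
  have h2 : (lam - 1) * lambdaBernoulli lam (n + 1) =
      (if n = 0 then (1 : ℂ) else 0) -
        lam * ∑ k ∈ Finset.range (n + 1),
          (((n + 1).choose k : ℕ) : ℂ) * lambdaBernoulli lam k := by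
    rw [lambdaBernoulli_succ]
    field_simp
  rw [Finset.sum_range_succ, Nat.choose_self]
  push_cast
  linear_combination h2

/-- geometric sum bound -/
lemma geom_sum_le_aux {M : ℝ} (hM : 2 ≤ M) (n : ℕ) :
    ∑ k ∈ Finset.range (n + 1), M ^ k ≤ 2 * M ^ n := by
  induction n with
  | zero => simp
  | succ n ih =>
      rw [Finset.sum_range_succ]
      have h1 : 2 * M ^ n ≤ M ^ (n + 1) := by
        rw [pow_succ]
        nlinarith [pow_nonneg (by linarith : (0:ℝ) ≤ M) n]
      linarith

lemma lambdaBernoulli_bound (lam : ℂ) (h1 : lam ≠ 1) :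
    ∃ M : ℝ, 2 ≤ M ∧ ∀ n, ‖lambdaBernoulli lam n‖ ≤ M ^ (n + 1) * n.factorial := by
  have hd : (0:ℝ) < ‖lam - 1‖ := by
    rw [norm_pos_iff]; exact sub_ne_zero.mpr h1
  set d := ‖lam - 1‖ with hdd
  refine ⟨max 2 (max (‖lambdaBernoulli lam 0‖) (max (2 / d) (4 * ‖lam‖ / d))),
    le_max_left _ _, ?_⟩
  set M := max 2 (max (‖lambdaBernoulli lam 0‖) (max (2 / d) (4 * ‖lam‖ / d))) with hMdef
  have hM2 : (2:ℝ) ≤ M := le_max_left _ _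
  have hM0 : (0:ℝ) < M := by linarith
  have hMB0 : ‖lambdaBernoulli lam 0‖ ≤ M :=
    le_trans (le_max_left _ _) (le_max_right _ _)
  have hM2d : 2 ≤ M * d := by
    have : 2 / d ≤ M :=
      le_trans (le_max_of_le_left le_rfl) (le_max_of_le_right (le_max_right _ _))
    calc (2:ℝ) = 2 / d * d := by field_simp
      _ ≤ M * d := by apply mul_le_mul_of_nonneg_right this (le_of_lt hd)
  have hM4d : 4 * ‖lam‖ ≤ M * d := by
    have : 4 * ‖lam‖ / d ≤ M :=
      le_trans (le_max_of_le_right le_rfl) (le_max_of_le_right (le_max_right _ _))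
    calc 4 * ‖lam‖ = 4 * ‖lam‖ / d * d := by field_simp
      _ ≤ M * d := by apply mul_le_mul_of_nonneg_right this (le_of_lt hd)
  intro n
  induction n using Nat.strong_induction_on with
  | _ n ih =>
    match n with
    | 0 =>
        have : M ≤ M ^ (0 + 1) * (Nat.factorial 0 : ℝ) := by simp
        simpa using le_trans hMB0 this
    | n + 1 =>
        rw [lambdaBernoulli_succ]
        have hsum : ‖∑ k ∈ Finset.range (n + 1),
            (((n + 1).choose k : ℕ) : ℂ) * lambdaBernoulli lam k‖
            ≤ 2 * ((n + 1).factorial : ℝ) * M ^ (n + 1) := by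
          calc ‖∑ k ∈ Finset.range (n + 1),
              (((n + 1).choose k : ℕ) : ℂ) * lambdaBernoulli lam k‖
              ≤ ∑ k ∈ Finset.range (n + 1),
                ‖(((n + 1).choose k : ℕ) : ℂ) * lambdaBernoulli lam k‖ :=
                norm_sum_le _ _
            _ ≤ ∑ k ∈ Finset.range (n + 1), ((n + 1).factorial : ℝ) * M ^ (k + 1) := by
                apply Finset.sum_le_sum
                intro k hk
                have hk' : k < n + 1 := Finset.mem_range.mp hk
                have hBk : ‖lambdaBernoulli lam k‖ ≤ M ^ (k + 1) * k.factorial :=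
                  ih k (by omega)
                rw [norm_mul]
                have hc : ((n + 1).choose k : ℝ) * (k.factorial : ℝ)
                    ≤ ((n + 1).factorial : ℝ) := by
                  have heq := Nat.choose_mul_factorial_mul_factorial (le_of_lt hk')
                  have h2 : (n + 1).choose k * k.factorial ≤ (n + 1).factorial := by
                    calc (n + 1).choose k * k.factorial
                        ≤ (n + 1).choose k * k.factorial * (n + 1 - k).factorial :=
                          Nat.le_mul_of_pos_right _ (Nat.factorial_pos _)
                      _ = (n + 1).factorial := heq
                  exact_mod_cast h2
                have hnormc : ‖(((n + 1).choose k : ℕ) : ℂ)‖ = ((n + 1).choose k : ℝ) := by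
                  simp
                rw [hnormc]
                calc ((n + 1).choose k : ℝ) * ‖lambdaBernoulli lam k‖
                    ≤ ((n + 1).choose k : ℝ) * (M ^ (k + 1) * k.factorial) :=
                      mul_le_mul_of_nonneg_left hBk (by positivity)
                  _ = ((n + 1).choose k : ℝ) * (k.factorial : ℝ) * M ^ (k + 1) := by ring
                  _ ≤ ((n + 1).factorial : ℝ) * M ^ (k + 1) :=
                      mul_le_mul_of_nonneg_right hc (by positivity)
            _ = ((n + 1).factorial : ℝ) * (M * ∑ k ∈ Finset.range (n + 1), M ^ k) := by
                rw [Finset.mul_sum, Finset.mul_sum]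
                apply Finset.sum_congr rfl
                intro k _; rw [pow_succ]; ring
            _ ≤ ((n + 1).factorial : ℝ) * (M * (2 * M ^ n)) := by
                apply mul_le_mul_of_nonneg_left _ (by positivity)
                exact mul_le_mul_of_nonneg_left (geom_sum_le_aux hM2 n) (le_of_lt hM0)
            _ = 2 * ((n + 1).factorial : ℝ) * M ^ (n + 1) := by rw [pow_succ]; ring
        rw [norm_div, div_le_iff₀ hd]
        have hnum : ‖(if n = 0 then (1:ℂ) else 0) -
            lam * ∑ k ∈ Finset.range (n + 1),
              (((n + 1).choose k : ℕ) : ℂ) * lambdaBernoulli lam k‖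
            ≤ 1 + ‖lam‖ * (2 * ((n + 1).factorial : ℝ) * M ^ (n + 1)) := by
          refine le_trans (norm_sub_le _ _) ?_
          have h01 : ‖(if n = 0 then (1:ℂ) else 0)‖ ≤ 1 := by split <;> simp
          rw [norm_mul]
          have := mul_le_mul_of_nonneg_left hsum (norm_nonneg lam)
          linarith
        refine le_trans hnum ?_
        -- goal: 1 + ‖lam‖ * (2 * F * P) ≤ M^(n+2) * F * d
        have hfac : (1:ℝ) ≤ ((n + 1).factorial : ℝ) := by
          exact_mod_cast Nat.one_le_iff_ne_zero.mpr (Nat.factorial_ne_zero _)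
        have hP1 : (1:ℝ) ≤ M ^ (n + 1) := one_le_pow₀ (by linarith)
        have hrw : M ^ (n + 1 + 1) = M ^ (n + 1) * M := pow_succ M (n + 1)
        rw [hrw]
        set F := ((n + 1).factorial : ℝ)
        set P := M ^ (n + 1)
        have hL : (0:ℝ) ≤ ‖lam‖ := norm_nonneg _
        nlinarith [mul_nonneg (mul_nonneg (sub_nonneg.mpr hM4d) (by linarith : (0:ℝ) ≤ F))
            (by linarith : (0:ℝ) ≤ P),
          mul_nonneg (sub_nonneg.mpr hM2d)
            (by nlinarith : (0:ℝ) ≤ F * P - 1)]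

/-- for `λ ∈ ℂ`, `λ ≠ 0`, `λ ≠ 1`, there exists `ρ > 0` such that the power
series `∑_{n≥0} B_n(λ)·t^n/n!` converges absolutely for `|t| < ρ` and satisfies
`(λ·e^t - 1)·∑_{n≥0} B_n(λ)·t^n/n! = Log λ + t` there; i.e. the `B_n(λ)` have generating
function `(Log λ + t)/(λ e^t - 1)` near `t = 0`. -/
theorem lambdaBernoulli_generating_function (lam : ℂ) (h0 : lam ≠ 0) (h1 : lam ≠ 1) :
    ∃ ρ : ℝ, 0 < ρ ∧ ∀ t : ℂ, ‖t‖ < ρ →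
      Summable (fun n : ℕ => ‖lambdaBernoulli lam n * t ^ n / (n.factorial : ℂ)‖) ∧
      (lam * Complex.exp t - 1) *
          (∑' n : ℕ, lambdaBernoulli lam n * t ^ n / (n.factorial : ℂ)) =
        Complex.log lam + t := by
  obtain ⟨M, hM2, hB⟩ := lambdaBernoulli_bound lam h1
  have hM0 : (0:ℝ) < M := by linarith
  refine ⟨1 / (2 * M), by positivity, ?_⟩
  intro t ht
  set a : ℕ → ℂ := fun n => lambdaBernoulli lam n * t ^ n / (n.factorial : ℂ) with ha_def
  have hfaccast : ∀ n : ℕ, ((n.factorial : ℕ) : ℂ) ≠ 0 := fun n => by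
    exact_mod_cast Nat.factorial_ne_zero n
  -- summability
  have hle : ∀ n, ‖a n‖ ≤ M * (M * ‖t‖) ^ n := by
    intro n
    have h1 : ‖a n‖ = ‖lambdaBernoulli lam n‖ * ‖t‖ ^ n / (n.factorial : ℝ) := by
      rw [ha_def]
      simp only [norm_div, norm_mul, norm_pow, Complex.norm_natCast]
    rw [h1]
    have hfpos : (0:ℝ) < (n.factorial : ℝ) := by exact_mod_cast Nat.factorial_pos n
    rw [div_le_iff₀ hfpos]
    calc ‖lambdaBernoulli lam n‖ * ‖t‖ ^ n
        ≤ M ^ (n + 1) * (n.factorial : ℝ) * ‖t‖ ^ n := by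
          apply mul_le_mul_of_nonneg_right (hB n) (by positivity)
      _ = M * (M * ‖t‖) ^ n * (n.factorial : ℝ) := by
          rw [mul_pow, pow_succ]; ring
  have hr : (0:ℝ) ≤ M * ‖t‖ := by positivity
  have hr1 : M * ‖t‖ < 1 := by
    have h2 : ‖t‖ * (2 * M) < 1 := (lt_div_iff₀ (by positivity)).mp ht
    nlinarith [norm_nonneg t]
  have habs : Summable (fun n => ‖a n‖) :=
    Summable.of_nonneg_of_le (fun n => norm_nonneg _) hle
      ((summable_geometric_of_lt_one hr hr1).mul_left M)
  refine ⟨habs, ?_⟩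
  -- the exponential series
  set b : ℕ → ℂ := fun n => t ^ n / (n.factorial : ℂ) with hb_def
  have hbabs : Summable (fun n => ‖b n‖) := NormedSpace.norm_expSeries_div_summable t
  have hexp : Complex.exp t = ∑' n, b n := by
    rw [Complex.exp_eq_exp_ℂ, NormedSpace.exp_eq_tsum_div]
  -- Cauchy product
  set c : ℕ → ℂ := fun n => ∑ k ∈ Finset.range (n + 1), a k * b (n - k) with hc_def
  have hcauchy : (∑' n, a n) * (∑' n, b n) = ∑' n, c n :=
    tsum_mul_tsum_eq_tsum_sum_range_of_summable_norm habs hbabs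
  have hcsum : Summable c :=
    (summable_norm_sum_mul_range_of_summable_norm habs hbabs).of_norm
  -- key computation of each Cauchy coefficient
  have hck : ∀ n : ℕ, c n =
      (∑ k ∈ Finset.range (n + 1), ((n.choose k : ℕ) : ℂ) * lambdaBernoulli lam k) *
        (t ^ n / (n.factorial : ℂ)) := by
    intro n
    rw [hc_def, Finset.sum_mul]
    apply Finset.sum_congr rfl
    intro k hk
    have hkn : k ≤ n := Nat.lt_succ_iff.mp (Finset.mem_range.mp hk)
    have hchoose : ((n.choose k : ℕ) : ℂ) =
        (n.factorial : ℂ) / ((k.factorial : ℂ) * ((n - k).factorial : ℂ)) := by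
      exact_mod_cast Nat.cast_choose ℂ hkn
    have htpow : t ^ k * t ^ (n - k) = t ^ n := by
      rw [← pow_add, Nat.add_sub_cancel' hkn]
    rw [ha_def, hb_def, hchoose]
    field_simp
    rw [mul_assoc (lambdaBernoulli lam k) (t ^ k) (t ^ (n - k)), htpow,
      show lambdaBernoulli lam k * (↑n.factorial : ℂ) * t ^ n =
        lambdaBernoulli lam k * t ^ n * ↑n.factorial from by ring,
      mul_div_mul_right _ _ (hfaccast n)]
  have hkey : ∀ n : ℕ, lam * c n - a n =
      if n = 0 then Complex.log lam else if n = 1 then t else 0 := by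
    intro n
    match n with
    | 0 =>
        simp only [hck 0, ha_def]
        simp [lambdaBernoulli_zero_mul lam h1, mul_comm, ← sub_mul]
        rw [← lambdaBernoulli_zero_mul lam h1]
        ring
    | n + 1 =>
        have hrec := lambdaBernoulli_rec lam h1 n
        rw [hck (n + 1), ha_def]
        have : lam * ((∑ k ∈ Finset.range (n + 2),
            (((n + 1).choose k : ℕ) : ℂ) * lambdaBernoulli lam k) *
              (t ^ (n + 1) / ((n + 1).factorial : ℂ))) -
            lambdaBernoulli lam (n + 1) * t ^ (n + 1) / ((n + 1).factorial : ℂ) =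
            (lam * ∑ k ∈ Finset.range (n + 2),
              (((n + 1).choose k : ℕ) : ℂ) * lambdaBernoulli lam k -
                lambdaBernoulli lam (n + 1)) * (t ^ (n + 1) / ((n + 1).factorial : ℂ)) := by
          ring
        rw [this, hrec]
        match n with
        | 0 => simp
        | m + 1 => simp
  -- put everything together
  have hasum : Summable a := habs.of_norm
  calc (lam * Complex.exp t - 1) * (∑' n, a n)
      = lam * ((∑' n, a n) * (∑' n, b n)) - ∑' n, a n := by rw [hexp]; ring
    _ = lam * (∑' n, c n) - ∑' n, a n := by rw [hcauchy]
    _ = (∑' n, lam * c n) - ∑' n, a n := by rw [tsum_mul_left]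
    _ = ∑' n, (lam * c n - a n) := (Summable.tsum_sub (hcsum.mul_left lam) hasum).symm
    _ = ∑' n, (if n = 0 then Complex.log lam else if n = 1 then t else 0) := by
        apply tsum_congr hkey
    _ = Complex.log lam + t := by
        rw [tsum_eq_sum (s := {0, 1}) ?_]
        · simp
        · intro n hn
          simp only [Finset.mem_insert, Finset.mem_singleton] at hn
          push_neg at hn
          simp [hn.1, hn.2]
end
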